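/- Let p, α, β be real numbers and let r₁, r₂, r₃ be real numbers with 2 ≤ r₁ ≤ p, 2 ≤ r₂ ≤ α, and 2 ≤ r₃ ≤ β. Then for every continuously differentiable function v : [0,1] → ℝ one has (∫₀¹ |v|^p dx)^{r₁/p} + |v(0)|^{r₂} + |v(1)|^{r₃} ≤ 5·( ‖v‖₁² + ∫₀¹ |v|^p dx + |v(0)|^α + |v(1)|^β ). -/

import Mathlib

open intervalIntegral Set

/-- Interpolation of powers: for `0 ≤ t` and `0 < c ≤ a ≤ b`, `t^a ≤ t^c + t^b`. -/
lemma aux_rpow_interp {t a b c : ℝ} (ht : 0 ≤ t) (hc : 0 < c) (hca : c ≤ a) (hab : a ≤ b) :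
    t ^ a ≤ t ^ c + t ^ b := by
  rcases ht.eq_or_lt with h | h
  · rw [← h, Real.zero_rpow (by linarith : a ≠ 0)]
    have h1 : (0:ℝ) ≤ (0:ℝ) ^ c := Real.rpow_nonneg le_rfl c
    have h2 : (0:ℝ) ≤ (0:ℝ) ^ b := Real.rpow_nonneg le_rfl b
    linarith
  rcases le_or_gt t 1 with h1 | h1
  · have h3 := Real.rpow_le_rpow_of_exponent_ge h h1 hca
    have h2 : (0:ℝ) ≤ t ^ b := Real.rpow_nonneg ht b
    linarith
  · have h3 := Real.rpow_le_rpow_of_exponent_le h1.le hab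
    have h2 : (0:ℝ) ≤ t ^ c := Real.rpow_nonneg ht c
    linarith

/-- Lemma 3.3. -/
theorem stmt_4 (p α β r₁ r₂ r₃ : ℝ)
    (hr₁ : 2 ≤ r₁) (hr₁p : r₁ ≤ p)
    (hr₂ : 2 ≤ r₂) (hr₂α : r₂ ≤ α)
    (hr₃ : 2 ≤ r₃) (hr₃β : r₃ ≤ β)
    (v : ℝ → ℝ) (hv : ContDiff ℝ 1 v) :
    (∫ x in (0:ℝ)..1, |v x| ^ p) ^ (r₁ / p) + |v 0| ^ r₂ + |v 1| ^ r₃ ≤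
      5 * (((∫ x in (0:ℝ)..1, (v x) ^ 2) + ∫ x in (0:ℝ)..1, (deriv v x) ^ 2) +
        (∫ x in (0:ℝ)..1, |v x| ^ p) + |v 0| ^ α + |v 1| ^ β) := by
  have hp : (2:ℝ) ≤ p := hr₁.trans hr₁p
  have hp0 : (0:ℝ) < p := by linarith
  have hvc : Continuous v := hv.continuous
  have hdc : Continuous (deriv v) := hv.continuous_deriv le_rfl
  set I2 : ℝ := ∫ x in (0:ℝ)..1, (v x) ^ 2 with hI2
  set D2 : ℝ := ∫ x in (0:ℝ)..1, (deriv v x) ^ 2 with hD2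
  set A : ℝ := ∫ x in (0:ℝ)..1, |v x| ^ p with hA
  set J : ℝ := ∫ x in (0:ℝ)..1, |2 * v x * deriv v x| with hJdef
  have hcont_p : Continuous (fun x => |v x| ^ p) := by
    apply Continuous.rpow_const (continuous_abs.comp hvc)
    intro x; exact Or.inr hp0.le
  have hcont_J : Continuous (fun x => |2 * v x * deriv v x|) :=
    ((continuous_const.mul hvc).mul hdc).abs
  have hint_v2 : IntervalIntegrable (fun x => (v x)^2) MeasureTheory.volume 0 1 :=
    (hvc.pow 2).intervalIntegrable 0 1
  have hint_d2 : IntervalIntegrable (fun x => (deriv v x)^2) MeasureTheory.volume 0 1 :=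
    (hdc.pow 2).intervalIntegrable 0 1
  have hint_p : IntervalIntegrable (fun x => |v x| ^ p) MeasureTheory.volume 0 1 :=
    hcont_p.intervalIntegrable 0 1
  have hint_J : IntervalIntegrable (fun x => |2 * v x * deriv v x|) MeasureTheory.volume 0 1 :=
    hcont_J.intervalIntegrable 0 1
  -- nonnegativity
  have hA0 : 0 ≤ A := intervalIntegral.integral_nonneg zero_le_one
    (fun x _ => Real.rpow_nonneg (abs_nonneg _) p)
  have hI20 : 0 ≤ I2 := intervalIntegral.integral_nonneg zero_le_one (fun x _ => sq_nonneg _)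
  have hD20 : 0 ≤ D2 := intervalIntegral.integral_nonneg zero_le_one (fun x _ => sq_nonneg _)
  have hv0α : 0 ≤ |v 0| ^ α := Real.rpow_nonneg (abs_nonneg _) α
  have hv1β : 0 ≤ |v 1| ^ β := Real.rpow_nonneg (abs_nonneg _) β
  -- max point of |v| on [0,1]
  obtain ⟨c, hcmem, hcmax⟩ := (isCompact_Icc (a := (0:ℝ)) (b := 1)).exists_isMaxOn
    (nonempty_Icc.2 zero_le_one) ((continuous_abs.comp hvc).continuousOn)
  -- min point of v^2 on [0,1]
  obtain ⟨y₀, hy₀mem, hy₀min⟩ := (isCompact_Icc (a := (0:ℝ)) (b := 1)).exists_isMinOn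
    (nonempty_Icc.2 zero_le_one) ((hvc.pow 2).continuousOn)
  have hy₀le : (v y₀)^2 ≤ I2 := by
    calc (v y₀)^2 = ∫ x in (0:ℝ)..1, (v y₀)^2 := by simp
      _ ≤ I2 := intervalIntegral.integral_mono_on zero_le_one intervalIntegrable_const hint_v2
          (fun x hx => hy₀min hx)
  -- key pointwise bound
  have key : ∀ x ∈ Icc (0:ℝ) 1, (v x)^2 ≤ I2 + J := by
    intro x hx
    have hderiv : ∀ t ∈ uIcc y₀ x, HasDerivAt (fun t => (v t)^2) (2 * v t * deriv v t) t := by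
      intro t _
      have h := (hv.differentiable one_ne_zero t).hasDerivAt
      have h2 := h.fun_pow 2
      simpa [pow_one, mul_comm, mul_assoc, mul_left_comm] using h2
    have hfi : ∀ a b : ℝ, IntervalIntegrable (fun t => 2 * v t * deriv v t)
        MeasureTheory.volume a b :=
      fun a b => ((continuous_const.mul hvc).mul hdc).intervalIntegrable a b
    have heq : ∫ t in y₀..x, 2 * v t * deriv v t = (v x)^2 - (v y₀)^2 :=
      intervalIntegral.integral_eq_sub_of_hasDerivAt hderiv (hfi y₀ x)
    have habs : |∫ t in y₀..x, 2 * v t * deriv v t| ≤ J := by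
      rcases le_total y₀ x with h | h
      · calc |∫ t in y₀..x, 2 * v t * deriv v t|
            ≤ ∫ t in y₀..x, |2 * v t * deriv v t| :=
              intervalIntegral.abs_integral_le_integral_abs h
          _ ≤ J := intervalIntegral.integral_mono_interval hy₀mem.1 h hx.2
              (MeasureTheory.ae_of_all _ (fun t => abs_nonneg _)) hint_J
      · rw [intervalIntegral.integral_symm, abs_neg]
        calc |∫ t in x..y₀, 2 * v t * deriv v t|
            ≤ ∫ t in x..y₀, |2 * v t * deriv v t| :=
              intervalIntegral.abs_integral_le_integral_abs h
          _ ≤ J := intervalIntegral.integral_mono_interval hx.1 h hy₀mem.2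
              (MeasureTheory.ae_of_all _ (fun t => abs_nonneg _)) hint_J
    have := abs_le.mp (heq ▸ habs)
    linarith [hy₀le]
  -- bound 3 J ≤ 2 I2 + 4.5 D2
  have hJle : 3 * J ≤ 2 * I2 + 4.5 * D2 := by
    have hmono : ∫ x in (0:ℝ)..1, (3 * |2 * v x * deriv v x|)
        ≤ ∫ x in (0:ℝ)..1, (2 * (v x)^2 + 4.5 * (deriv v x)^2) := by
      apply intervalIntegral.integral_mono_on zero_le_one
        (hint_J.const_mul 3)
        ((hint_v2.const_mul 2).add (hint_d2.const_mul 4.5))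
      intro x _
      have h1 : |2 * v x * deriv v x| = 2 * (|v x| * |deriv v x|) := by
        rw [abs_mul, abs_mul, abs_two]; ring
      rw [h1]
      nlinarith [sq_nonneg (2 * |v x| - 3 * |deriv v x|), sq_abs (v x), sq_abs (deriv v x),
        abs_nonneg (v x), abs_nonneg (deriv v x)]
    rw [intervalIntegral.integral_const_mul, intervalIntegral.integral_add
      (hint_v2.const_mul 2) (hint_d2.const_mul 4.5),
      intervalIntegral.integral_const_mul, intervalIntegral.integral_const_mul] at hmono
    linarith [hmono]
  -- A ≤ |v c|^p
  have hAle : A ≤ |v c| ^ p := by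
    calc A ≤ ∫ x in (0:ℝ)..1, |v c| ^ p :=
        intervalIntegral.integral_mono_on zero_le_one hint_p intervalIntegrable_const
          (fun x hx => Real.rpow_le_rpow (abs_nonneg _) (hcmax hx) hp0.le)
      _ = |v c| ^ p := by simp
  -- A ^ (2/p) ≤ |v c|^2
  have hA2p : A ^ ((2:ℝ)/p) ≤ (v c)^2 := by
    calc A ^ ((2:ℝ)/p) ≤ (|v c| ^ p) ^ ((2:ℝ)/p) :=
        Real.rpow_le_rpow hA0 hAle (by positivity)
      _ = |v c| ^ (p * ((2:ℝ)/p)) := (Real.rpow_mul (abs_nonneg _) _ _).symm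
      _ = |v c| ^ ((2:ℕ):ℝ) := by congr 1; field_simp; norm_num
      _ = (v c)^2 := by rw [Real.rpow_natCast, sq_abs]
  -- interpolation bounds
  have hb1 : A ^ (r₁ / p) ≤ A ^ ((2:ℝ)/p) + A := by
    have := aux_rpow_interp hA0 (c := (2:ℝ)/p) (a := r₁/p) (b := 1)
      (by positivity) ((div_le_div_iff_of_pos_right hp0).mpr hr₁)
      (by rw [div_le_one hp0]; exact hr₁p)
    simpa [Real.rpow_one] using this
  have hsq0 : |v 0| ^ ((2:ℝ)) = (v 0)^2 := by
    rw [show (2:ℝ) = ((2:ℕ):ℝ) by norm_num, Real.rpow_natCast, sq_abs]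
  have hsq1 : |v 1| ^ ((2:ℝ)) = (v 1)^2 := by
    rw [show (2:ℝ) = ((2:ℕ):ℝ) by norm_num, Real.rpow_natCast, sq_abs]
  have hb2 : |v 0| ^ r₂ ≤ (v 0)^2 + |v 0| ^ α := by
    have := aux_rpow_interp (abs_nonneg (v 0)) (c := (2:ℝ)) two_pos hr₂ hr₂α
    rwa [hsq0] at this
  have hb3 : |v 1| ^ r₃ ≤ (v 1)^2 + |v 1| ^ β := by
    have := aux_rpow_interp (abs_nonneg (v 1)) (c := (2:ℝ)) two_pos hr₃ hr₃β
    rwa [hsq1] at this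
  have k0 := key 0 (by norm_num)
  have k1 := key 1 (by norm_num)
  have kc := key c hcmem
  linarith [hb1, hb2, hb3, hA2p, k0, k1, kc, hJle]
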